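/- arXiv:0806.3686 — 5 statements merged into one kernel-verified Lean document; each statement's English description precedes it below -/
import Mathlib

section
/- For all real numbers u, v with 0 < u ≤ 1 and 0 < v ≤ 1, one has max(0, 1 + log(u·v)) = max(0, max(0, 1 + log u) + max(0, 1 + log v) − 1). In other words, the map Λ^∨(x) = max(0, 1 + log x) is a morphism from the pointwise product of cumulative distribution functions (the classical upper extremal convolution) to the operation (s, t) ↦ max(0, s + t − 1) (the free upper extremal convolution). -/
lemma lambda_vee_aux (a b : ℝ) (ha : a ≤ 0) (hb : b ≤ 0) :
    max 0 (1 + (a + b)) = max 0 (max 0 (1 + a) + max 0 (1 + b) - 1) := by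
  rcases le_or_gt (1 + a) 0 with h1 | h1 <;> rcases le_or_gt (1 + b) 0 with h2 | h2
  · rw [max_eq_left h1, max_eq_left h2, max_eq_left (by linarith), max_eq_left (by linarith)]
  · rw [max_eq_left h1, max_eq_right h2.le, max_eq_left (by linarith), max_eq_left (by linarith)]
  · rw [max_eq_right h1.le, max_eq_left h2, max_eq_left (by linarith), max_eq_left (by linarith)]
  · rw [max_eq_right h1.le, max_eq_right h2.le]
    ring_nf
/-- **Λ^∨ is a morphism from classical to free upper extremal convolution.**
For all `u, v ∈ (0, 1]`,
`max 0 (1 + log (u*v)) = max 0 (max 0 (1 + log u) + max 0 (1 + log v) - 1)`. -/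
theorem lambda_vee_morphism (u v : ℝ) (hu : 0 < u) (hu1 : u ≤ 1) (hv : 0 < v) (hv1 : v ≤ 1) :
    max 0 (1 + Real.log (u * v)) =
      max 0 (max 0 (1 + Real.log u) + max 0 (1 + Real.log v) - 1) := by
  rw [Real.log_mul hu.ne' hv.ne']
  exact lambda_vee_aux _ _ (Real.log_nonpos hu.le hu1) (Real.log_nonpos hv.le hv1)
end

section
/- Let μ and ν be probability measures on ℝ with cumulative distribution functions F_μ and F_ν, and for u ∈ (0,1) set F^{<−1>}(u) = inf{x ∈ ℝ : F(x) ≥ u} (the infimum is attained). Then the following three quantities (each possibly infinite, valued in [0, +∞]) are equal: (1) inf{ε > 0 : for all x ∈ ℝ, F_ν(x − ε) ≤ F_μ(x) ≤ F_ν(x + ε)}; (2) sup_{u ∈ (0,1)} |F_μ^{<−1>}(u) − F_ν^{<−1>}(u)|; (3) the infimum, over all probability measures π on ℝ × ℝ whose first marginal is μ and whose second marginal is ν, of the π-essential supremum of |x − y|. -/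
open MeasureTheory
open scoped ENNReal

/-- The cumulative distribution function of a measure on `ℝ`. -/
noncomputable def cdf' (μ : Measure ℝ) : ℝ → ℝ := fun x => (μ (Set.Iic x)).toReal

/-- The (attained) generalized inverse `F_μ^{<-1>}(u) = inf {x | F_μ(x) ≥ u}`. -/
noncomputable def qf (μ : Measure ℝ) (u : ℝ) : ℝ := sInf {x : ℝ | u ≤ cdf' μ x}

set_option linter.unusedSectionVars false

section helpers

open ProbabilityTheory Filter Set

variable (μ : Measure ℝ) [IsProbabilityMeasure μ]

lemma cdf'_eq_cdf : cdf' μ = ⇑(cdf μ) := by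
  funext x; rw [cdf_eq_real]; rfl

lemma cdf'_mono : Monotone (cdf' μ) := by
  rw [cdf'_eq_cdf]; exact (cdf μ).mono

lemma cdf'_nonneg (x : ℝ) : 0 ≤ cdf' μ x := ENNReal.toReal_nonneg

lemma cdf'_le_one (x : ℝ) : cdf' μ x ≤ 1 := by
  have h : μ (Set.Iic x) ≤ 1 := prob_le_one
  simpa [cdf'] using ENNReal.toReal_mono ENNReal.one_ne_top h

variable {μ}

lemma qfSet_nonempty {u : ℝ} (hu : u < 1) : {x : ℝ | u ≤ cdf' μ x}.Nonempty := by
  simp only [cdf'_eq_cdf μ]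
  exact ((tendsto_cdf_atTop μ).eventually (eventually_ge_nhds hu)).exists

lemma qfSet_bddBelow {u : ℝ} (hu : 0 < u) : BddBelow {x : ℝ | u ≤ cdf' μ x} := by
  have h : ∃ x₀ : ℝ, cdf' μ x₀ < u := by
    simp only [cdf'_eq_cdf μ]
    exact ((tendsto_cdf_atBot μ).eventually (eventually_lt_nhds hu)).exists
  obtain ⟨x₀, hx₀⟩ := h
  refine ⟨x₀, fun s hs => ?_⟩
  by_contra hlt
  exact absurd (hs.trans (cdf'_mono μ (le_of_not_ge hlt))) (not_le.mpr hx₀)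

lemma qf_mem {u : ℝ} (hu : u ∈ Ioo (0:ℝ) 1) : u ≤ cdf' μ (qf μ u) := by
  have hne := qfSet_nonempty (μ := μ) hu.2
  have key : ∀ x, qf μ u < x → u ≤ cdf' μ x := by
    intro x hx
    obtain ⟨s, hs, hsx⟩ := exists_lt_of_csInf_lt hne hx
    exact hs.trans (cdf'_mono μ hsx.le)
  have hrc : Filter.Tendsto (cdf' μ) (nhdsWithin (qf μ u) (Ioi (qf μ u)))
      (nhds (cdf' μ (qf μ u))) := by
    rw [cdf'_eq_cdf]
    exact (((cdf μ).right_continuous (qf μ u)).mono Ioi_subset_Ici_self)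
  exact ge_of_tendsto hrc (eventually_nhdsWithin_of_forall fun x hx => key x hx)

lemma qf_le_iff {u x : ℝ} (hu : u ∈ Ioo (0:ℝ) 1) : qf μ u ≤ x ↔ u ≤ cdf' μ x := by
  constructor
  · intro h; exact (qf_mem hu).trans (cdf'_mono μ h)
  · intro h; exact csInf_le (qfSet_bddBelow hu.1) h

lemma le_qf {u x : ℝ} (hu : u < 1) (h : cdf' μ x < u) : x ≤ qf μ u := by
  refine le_csInf (qfSet_nonempty hu) fun s hs => ?_
  by_contra hlt
  exact absurd ((hs : u ≤ cdf' μ s).trans (cdf'_mono μ (le_of_not_ge hlt)))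
    (not_le.mpr h)

lemma qf_monotoneOn : MonotoneOn (qf μ) (Ioo (0:ℝ) 1) := by
  intro u hu v hv huv
  exact csInf_le_csInf (qfSet_bddBelow hu.1) (qfSet_nonempty hv.2)
    (fun x hx => le_trans huv hx)

variable {ν : Measure ℝ} [IsProbabilityMeasure ν]

/-- L1: the CDF ε-sandwich condition bounds quantile differences. -/
lemma abs_qf_sub_le {c : ℝ}
    (h : ∀ x : ℝ, cdf' ν (x - c) ≤ cdf' μ x ∧ cdf' μ x ≤ cdf' ν (x + c))
    {u : ℝ} (hu : u ∈ Ioo (0:ℝ) 1) : |qf μ u - qf ν u| ≤ c := by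
  rw [abs_sub_le_iff]
  constructor
  · -- qf μ u - qf ν u ≤ c, i.e. qf μ u ≤ qf ν u + c
    have h1 : u ≤ cdf' ν (qf ν u) := qf_mem hu
    have h2 : cdf' ν ((qf ν u + c) - c) ≤ cdf' μ (qf ν u + c) := (h (qf ν u + c)).1
    rw [add_sub_cancel_right] at h2
    have := (qf_le_iff (μ := μ) hu).mpr (h1.trans h2)
    linarith
  · -- qf ν u - qf μ u ≤ c
    have h1 : u ≤ cdf' μ (qf μ u) := qf_mem hu
    have h2 : cdf' μ (qf μ u) ≤ cdf' ν (qf μ u + c) := (h (qf μ u)).2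
    have := (qf_le_iff (μ := ν) hu).mpr (h1.trans h2)
    linarith

/-- L2: quantile difference bounds give the CDF sandwich condition for any larger ε. -/
lemma cdf_sandwich_of_qf {c ε : ℝ}
    (h : ∀ u ∈ Ioo (0:ℝ) 1, |qf μ u - qf ν u| ≤ c) (hcε : c < ε) (x : ℝ) :
    cdf' ν (x - ε) ≤ cdf' μ x ∧ cdf' μ x ≤ cdf' ν (x + ε) := by
  constructor
  · by_contra hlt
    push_neg at hlt
    set u := (cdf' μ x + cdf' ν (x - ε)) / 2 with hu_def
    have hu1 : cdf' μ x < u := by simp only [hu_def]; linarith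
    have hu2 : u < cdf' ν (x - ε) := by simp only [hu_def]; linarith
    have hu : u ∈ Ioo (0:ℝ) 1 :=
      ⟨lt_of_le_of_lt (cdf'_nonneg μ x) hu1, lt_of_lt_of_le hu2 (cdf'_le_one ν _)⟩
    have hA : qf ν u ≤ x - ε := (qf_le_iff hu).mpr hu2.le
    have hB : x ≤ qf μ u := le_qf hu.2 hu1
    have := h u hu
    rw [abs_sub_le_iff] at this
    linarith [this.1]
  · by_contra hlt
    push_neg at hlt
    set u := (cdf' ν (x + ε) + cdf' μ x) / 2 with hu_def
    have hu1 : cdf' ν (x + ε) < u := by simp only [hu_def]; linarith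
    have hu2 : u < cdf' μ x := by simp only [hu_def]; linarith
    have hu : u ∈ Ioo (0:ℝ) 1 :=
      ⟨lt_of_le_of_lt (cdf'_nonneg ν _) hu1, lt_of_lt_of_le hu2 (cdf'_le_one μ x)⟩
    have hA : qf μ u ≤ x := (qf_le_iff hu).mpr hu2.le
    have hB : x + ε ≤ qf ν u := le_qf hu.2 hu1
    have := h u hu
    rw [abs_sub_le_iff] at this
    linarith [this.2]

/-- Inverse transform sampling: the quantile function pushes the uniform measure on `(0,1)`
forward to `μ`. -/
lemma map_qf (μ : Measure ℝ) [IsProbabilityMeasure μ] :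
    (volume.restrict (Ioo (0:ℝ) 1)).map (qf μ) = μ := by
  have haem : AEMeasurable (qf μ) (volume.restrict (Ioo (0:ℝ) 1)) :=
    aemeasurable_restrict_of_monotoneOn measurableSet_Ioo qf_monotoneOn
  have hprob : IsProbabilityMeasure (volume.restrict (Ioo (0:ℝ) 1)) := by
    constructor; rw [Measure.restrict_apply_univ]; simp
  have : IsProbabilityMeasure ((volume.restrict (Ioo (0:ℝ) 1)).map (qf μ)) :=
    Measure.isProbabilityMeasure_map haem
  refine Measure.ext_of_Iic _ _ fun x => ?_
  rw [Measure.map_apply_of_aemeasurable haem measurableSet_Iic,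
    Measure.restrict_apply₀' measurableSet_Ioo.nullMeasurableSet]
  have hset : qf μ ⁻¹' Iic x ∩ Ioo 0 1 = Iic (cdf' μ x) ∩ Ioo 0 1 := by
    ext u
    simp only [mem_inter_iff, mem_preimage, mem_Iic, and_congr_left_iff]
    intro hu
    exact qf_le_iff hu
  rw [hset]
  rcases lt_or_ge (cdf' μ x) 1 with hlt | hge
  · have : Iic (cdf' μ x) ∩ Ioo (0:ℝ) 1 = Ioc 0 (cdf' μ x) := by
      ext u
      simp only [mem_inter_iff, mem_Iic, mem_Ioo, mem_Ioc]
      constructor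
      · rintro ⟨h1, h2, h3⟩; exact ⟨h2, h1⟩
      · rintro ⟨h1, h2⟩; exact ⟨h2, h1, lt_of_le_of_lt h2 hlt⟩
    rw [this, Real.volume_Ioc, sub_zero, cdf', ENNReal.ofReal_toReal (measure_ne_top μ _)]
  · have h1 : cdf' μ x = 1 := le_antisymm (cdf'_le_one μ x) hge
    have hμ1 : μ (Iic x) = 1 := (ENNReal.toReal_eq_one_iff _).mp h1
    have : Iic (cdf' μ x) ∩ Ioo (0:ℝ) 1 = Ioo 0 1 := by
      rw [h1]
      ext u
      simp only [mem_inter_iff, mem_Iic, mem_Ioo]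
      exact ⟨fun h => h.2, fun h => ⟨h.2.le, h⟩⟩
    rw [this, Real.volume_Ioo, hμ1]
    simp

end helpers

open Set Filter in
/-- **Lemma (i): three expressions for the Lévy–Prokhorov-type `∞`-distance.**
For probability measures `μ, ν` on `ℝ`, the following quantities in `[0, ∞]` coincide:
(1) the infimum of the `ε > 0` such that `F_ν(· - ε) ≤ F_μ(·) ≤ F_ν(· + ε)`;
(2) `sup_{u ∈ (0,1)} |F_μ^{<-1>}(u) - F_ν^{<-1>}(u)|`;
(3) the infimum over couplings `π` of `μ` and `ν` of the `π`-essential sup of `|x - y|`. -/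
theorem inf_eps_eq_sup_qf_eq_inf_coupling (μ ν : Measure ℝ)
    [IsProbabilityMeasure μ] [IsProbabilityMeasure ν] :
    sInf (ENNReal.ofReal ''
        {ε : ℝ | 0 < ε ∧ ∀ x : ℝ, cdf' ν (x - ε) ≤ cdf' μ x ∧ cdf' μ x ≤ cdf' ν (x + ε)}) =
      (⨆ u ∈ Set.Ioo (0 : ℝ) 1, ENNReal.ofReal |qf μ u - qf ν u|) ∧
    (⨆ u ∈ Set.Ioo (0 : ℝ) 1, ENNReal.ofReal |qf μ u - qf ν u|) =
      ⨅ (π : Measure (ℝ × ℝ)) (_ : π.map Prod.fst = μ ∧ π.map Prod.snd = ν),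
        essSup (fun p : ℝ × ℝ => ENNReal.ofReal |p.1 - p.2|) π := by
  set A := sInf (ENNReal.ofReal ''
    {ε : ℝ | 0 < ε ∧ ∀ x : ℝ, cdf' ν (x - ε) ≤ cdf' μ x ∧ cdf' μ x ≤ cdf' ν (x + ε)}) with hA
  set B := (⨆ u ∈ Set.Ioo (0 : ℝ) 1, ENNReal.ofReal |qf μ u - qf ν u|) with hB
  set C := ⨅ (π : Measure (ℝ × ℝ)) (_ : π.map Prod.fst = μ ∧ π.map Prod.snd = ν),
      essSup (fun p : ℝ × ℝ => ENNReal.ofReal |p.1 - p.2|) π with hC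
  -- B ≤ A
  have hBA : B ≤ A := by
    refine le_sInf fun b hb => ?_
    obtain ⟨ε, ⟨hε0, hε⟩, rfl⟩ := hb
    refine iSup₂_le fun u hu => ?_
    exact ENNReal.ofReal_le_ofReal (abs_qf_sub_le hε hu)
  -- A ≤ B
  have hAB : A ≤ B := by
    rcases eq_top_or_lt_top B with htop | hlt
    · rw [htop]; exact le_top
    · set c := B.toReal with hc
      have hc0 : 0 ≤ c := ENNReal.toReal_nonneg
      have hBc : B = ENNReal.ofReal c := (ENNReal.ofReal_toReal hlt.ne).symm
      have hqb : ∀ u ∈ Ioo (0:ℝ) 1, |qf μ u - qf ν u| ≤ c := by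
        intro u hu
        have h1 : ENNReal.ofReal |qf μ u - qf ν u| ≤ B := le_iSup₂_of_le u hu le_rfl
        rw [hBc, ENNReal.ofReal_le_ofReal_iff hc0] at h1
        exact h1
      rw [hBc]
      refine ENNReal.le_of_forall_pos_le_add fun δ hδ _ => ?_
      have hcδ : c < c + (δ : ℝ) := lt_add_of_pos_right c (by exact_mod_cast hδ)
      have hmem : ENNReal.ofReal (c + (δ:ℝ)) ∈ ENNReal.ofReal ''
          {ε : ℝ | 0 < ε ∧ ∀ x : ℝ, cdf' ν (x - ε) ≤ cdf' μ x ∧ cdf' μ x ≤ cdf' ν (x + ε)} := by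
        refine ⟨c + (δ:ℝ), ⟨lt_of_le_of_lt hc0 hcδ, fun x => cdf_sandwich_of_qf hqb hcδ x⟩, rfl⟩
      calc A ≤ ENNReal.ofReal (c + (δ:ℝ)) := sInf_le hmem
        _ = ENNReal.ofReal c + ENNReal.ofReal (δ:ℝ) := ENNReal.ofReal_add hc0 δ.coe_nonneg
        _ ≤ ENNReal.ofReal c + δ := by rw [ENNReal.ofReal_coe_nnreal]
  -- C ≤ B : inverse-transform coupling
  have hCB : C ≤ B := by
    set P := volume.restrict (Ioo (0:ℝ) 1) with hP
    have hprob : IsProbabilityMeasure P := by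
      constructor; rw [Measure.restrict_apply_univ]; simp
    have haemμ : AEMeasurable (qf μ) P :=
      aemeasurable_restrict_of_monotoneOn measurableSet_Ioo qf_monotoneOn
    have haemν : AEMeasurable (qf ν) P :=
      aemeasurable_restrict_of_monotoneOn measurableSet_Ioo qf_monotoneOn
    set T : ℝ → ℝ × ℝ := fun u => (qf μ u, qf ν u) with hT
    have haemT : AEMeasurable T P := haemμ.prodMk haemν
    set π := P.map T with hπ
    have hmg : Measurable (fun p : ℝ × ℝ => ENNReal.ofReal |p.1 - p.2|) := by
      apply Measurable.ennreal_ofReal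
      exact (measurable_fst.sub measurable_snd).abs
    have hfst : π.map Prod.fst = μ := by
      rw [hπ, AEMeasurable.map_map_of_aemeasurable measurable_fst.aemeasurable haemT]
      exact map_qf μ
    have hsnd : π.map Prod.snd = ν := by
      rw [hπ, AEMeasurable.map_map_of_aemeasurable measurable_snd.aemeasurable haemT]
      exact map_qf ν
    refine iInf₂_le_of_le π ⟨hfst, hsnd⟩ ?_
    rw [hπ, essSup_map_measure hmg.aemeasurable haemT]
    refine essSup_le_of_ae_le _ ?_
    have : ∀ᵐ u ∂P, u ∈ Ioo (0:ℝ) 1 := ae_restrict_mem measurableSet_Ioo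
    filter_upwards [this] with u hu
    exact le_iSup₂_of_le u hu le_rfl
  -- B ≤ C
  have hBC : B ≤ C := by
    refine le_iInf fun π => le_iInf fun hπ => ?_
    obtain ⟨hfst, hsnd⟩ := hπ
    set E := essSup (fun p : ℝ × ℝ => ENNReal.ofReal |p.1 - p.2|) π with hE
    rcases eq_top_or_lt_top E with htop | hlt
    · rw [htop]; exact le_top
    set c := E.toReal with hc
    have hc0 : 0 ≤ c := ENNReal.toReal_nonneg
    have hEc : E = ENNReal.ofReal c := (ENNReal.ofReal_toReal hlt.ne).symm
    have hae : ∀ᵐ p ∂π, |p.1 - p.2| ≤ c := by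
      have h := ENNReal.ae_le_essSup (μ := π) (f := fun p : ℝ × ℝ => ENNReal.ofReal |p.1 - p.2|)
      filter_upwards [h] with p hp
      rw [← hE, hEc, ENNReal.ofReal_le_ofReal_iff hc0] at hp
      exact hp
    -- CDF sandwich with c
    have hsandwich : ∀ x : ℝ, cdf' ν (x - c) ≤ cdf' μ x ∧ cdf' μ x ≤ cdf' ν (x + c) := by
      intro x
      have hμx : μ (Iic x) = π (Prod.fst ⁻¹' Iic x) := by
        rw [← hfst, Measure.map_apply measurable_fst measurableSet_Iic]
      have hν' : ∀ y : ℝ, ν (Iic y) = π (Prod.snd ⁻¹' Iic y) := by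
        intro y
        rw [← hsnd, Measure.map_apply measurable_snd measurableSet_Iic]
      constructor
      · -- ν (Iic (x - c)) ≤ μ (Iic x)
        have hm : π (Prod.snd ⁻¹' Iic (x - c)) ≤ π (Prod.fst ⁻¹' Iic x) := by
          refine measure_mono_ae ?_
          filter_upwards [hae] with p hp hmem
          have h1 : p.2 ≤ x - c := hmem
          have h2 := abs_le.mp hp
          show p.1 ≤ x
          linarith [h2.1]
        rw [cdf', cdf', hμx, hν' (x - c)]
        exact ENNReal.toReal_mono (by rw [← hμx]; exact measure_ne_top μ _) hm
      · have hm : π (Prod.fst ⁻¹' Iic x) ≤ π (Prod.snd ⁻¹' Iic (x + c)) := by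
          refine measure_mono_ae ?_
          filter_upwards [hae] with p hp hmem
          have h1 : p.1 ≤ x := hmem
          have h2 := abs_le.mp hp
          show p.2 ≤ x + c
          linarith [h2.1]
        rw [cdf', cdf', hμx, hν' (x + c)]
        exact ENNReal.toReal_mono (by rw [← hν' (x + c)]; exact measure_ne_top ν _) hm
    refine iSup₂_le fun u hu => ?_
    have := abs_qf_sub_le hsandwich hu
    calc ENNReal.ofReal |qf μ u - qf ν u| ≤ ENNReal.ofReal c := ENNReal.ofReal_le_ofReal this
      _ = E := hEc.symm
  exact ⟨le_antisymm hAB hBA, le_antisymm hBC hCB⟩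
end

section
/- Let μ be an atomless probability measure on ℝ with cumulative distribution function F, let T be a real number with F(T) > 0, and let m be a nonnegative integer. Then ∫_{(T, ∞)} (log F(t))^m / F(t) dμ(t) = −(log F(T))^{m+1}/(m+1) and ∫_{(−∞, T]} F(t)^m dμ(t) = F(T)^{m+1}/(m+1). -/
open MeasureTheory
open scoped ENNReal

open ProbabilityTheory Set Filter Topology
lemma cdf_level_measure (μ : Measure ℝ) [IsProbabilityMeasure μ] [NullSingletonClass μ]
    {u : ℝ} (hu : u ≤ 1) :
    μ {t | ProbabilityTheory.cdf μ t ≤ u} = ENNReal.ofReal u := by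
  set F : ℝ → ℝ := ⇑(cdf μ) with hF
  set S : Set ℝ := {t | F t ≤ u} with hS
  rcases lt_or_ge u 0 with h0 | h0
  · have hempty : S = ∅ :=
      eq_empty_of_forall_notMem fun t ht =>
        absurd ((cdf_nonneg μ t).trans ht) (not_le.mpr h0)
    rw [hempty, measure_empty, Eq.comm, ENNReal.ofReal_eq_zero]
    exact h0.le
  rcases eq_empty_or_nonempty S with hempty | ⟨t0, ht0⟩
  · have hu0 : u = 0 := by
      by_contra h
      have hupos : 0 < u := lt_of_le_of_ne h0 (Ne.symm h)
      have := (tendsto_cdf_atBot μ).eventually (eventually_lt_nhds hupos)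
      rcases this.exists with ⟨t, ht⟩
      exact absurd ht.le fun h' => (eq_empty_iff_forall_notMem.mp hempty) t h'
    rw [hempty, measure_empty, hu0, ENNReal.ofReal_zero]
  by_cases hbdd : BddAbove S
  · set s := sSup S with hs
    have hIio : Iio s ⊆ S := fun t ht => by
      rcases exists_lt_of_lt_csSup ⟨t0, ht0⟩ ht with ⟨t', ht'S, htt'⟩
      exact le_trans (monotone_cdf μ htt'.le) ht'S
    have hIic : S ⊆ Iic s := fun t ht => le_csSup hbdd ht
    have hioic : μ (Iio s) = μ (Iic s) := measure_congr (Iio_ae_eq_Iic (μ := μ) (a := s))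
    have hIio_le : μ (Iio s) ≤ ENNReal.ofReal u := by
      have hU : Iio s = ⋃ n : ℕ, Iic (s - 1 / (n + 1)) := by
        ext x
        simp only [mem_Iio, mem_iUnion, mem_Iic]
        constructor
        · intro hx
          obtain ⟨n, hn⟩ := exists_nat_one_div_lt (sub_pos.mpr hx)
          exact ⟨n, by linarith⟩
        · rintro ⟨n, hn⟩
          have : (0:ℝ) < 1 / (n + 1) := by positivity
          linarith
      have hmono : Monotone fun n : ℕ => Iic (s - 1 / (n + 1)) := by
        intro a b hab
        apply Iic_subset_Iic.mpr
        have : (1:ℝ) / (b + 1) ≤ 1 / (a + 1) := by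
          apply one_div_le_one_div_of_le (by positivity)
          exact_mod_cast by omega
        linarith
      rw [hU, hmono.directed_le.measure_iUnion]
      refine iSup_le fun n => ?_
      have hmem : s - 1 / (n + 1) ∈ S := hIio (by
        have : (0:ℝ) < 1 / (n + 1) := by positivity
        simp only [mem_Iio]; linarith)
      rw [← ofReal_cdf μ]
      exact ENNReal.ofReal_le_ofReal hmem
    -- F s ≤ u
    have hFs_le : F s ≤ u := by
      have h1 : ENNReal.ofReal (F s) = μ (Iic s) := ofReal_cdf μ s
      have h2 : ENNReal.ofReal (F s) ≤ ENNReal.ofReal u := by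
        rw [h1, ← hioic]; exact hIio_le
      exact (ENNReal.ofReal_le_ofReal_iff h0).mp h2
    -- F s ≥ u
    have hFs_ge : u ≤ F s := by
      by_contra h
      push_neg at h
      have hrc : ContinuousWithinAt F (Ici s) s := (cdf μ).right_continuous s
      have hev : ∀ᶠ t in nhdsWithin s (Ici s), F t < u :=
        hrc.eventually (eventually_lt_nhds h)
      have hev' : ∀ᶠ t in nhdsWithin s (Ioi s), F t < u :=
        hev.filter_mono (nhdsWithin_mono s Ioi_subset_Ici_self)
      rcases (hev'.and eventually_mem_nhdsWithin).exists with ⟨t, hFt, hts⟩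
      have : t ≤ s := le_csSup hbdd hFt.le
      exact absurd this (not_le.mpr hts)
    have hFsu : F s = u := le_antisymm hFs_le hFs_ge
    have hsub1 : μ (Iio s) ≤ μ S := measure_mono hIio
    have hsub2 : μ S ≤ μ (Iic s) := measure_mono hIic
    have : μ S = μ (Iic s) := le_antisymm hsub2 (hioic ▸ hsub1)
    rw [this, ← ofReal_cdf μ s]
    exact congrArg ENNReal.ofReal hFsu
  · have huniv : S = univ := by
      rw [eq_univ_iff_forall]
      intro t
      rcases (not_bddAbove_iff.mp hbdd) t with ⟨t', ht'S, htt'⟩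
      exact le_trans (monotone_cdf μ htt'.le) ht'S
    have h1u : (1:ℝ) ≤ u := by
      refine le_of_tendsto (tendsto_cdf_atTop μ) ?_
      exact Eventually.of_forall fun t => (eq_univ_iff_forall.mp huniv) t
    have : u = 1 := le_antisymm hu h1u
    rw [huniv, this, measure_univ, ENNReal.ofReal_one]

lemma map_cdf_eq (μ : Measure ℝ) [IsProbabilityMeasure μ] [NullSingletonClass μ] :
    μ.map (ProbabilityTheory.cdf μ) = volume.restrict (Icc (0:ℝ) 1) := by
  have hmeas : Measurable (⇑(cdf μ)) := (monotone_cdf μ).measurable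
  have hfin : IsFiniteMeasure (volume.restrict (Icc (0:ℝ) 1)) := by
    constructor
    rw [Measure.restrict_apply_univ, Real.volume_Icc]
    simp
  refine Measure.ext_of_Iic _ _ fun u => ?_
  rw [Measure.map_apply hmeas measurableSet_Iic, Measure.restrict_apply measurableSet_Iic,
    ← Ici_inter_Iic, inter_left_comm, Iic_inter_Iic, Ici_inter_Iic, Real.volume_Icc]
  rcases le_or_gt u 1 with hu | hu
  · have : (cdf μ) ⁻¹' (Iic u) = {t | cdf μ t ≤ u} := rfl
    rw [this, cdf_level_measure μ hu]
    rw [min_eq_left hu, sub_zero]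
  · have : (cdf μ) ⁻¹' (Iic u) = univ :=
      eq_univ_of_forall fun t => (cdf_le_one μ t).trans hu.le
    rw [this, measure_univ, min_eq_right hu.le]
    norm_num

section Main
variable (μ : Measure ℝ) [IsProbabilityMeasure μ] [NullSingletonClass μ] (T : ℝ)

lemma integral_log_cdf_pow_aux (hT : 0 < (cdf μ) T) (m : ℕ) :
    (∫ t in Set.Ioi T, (Real.log (cdf μ t)) ^ m / cdf μ t ∂μ) =
        -((Real.log (cdf μ T)) ^ (m + 1) / (m + 1)) ∧
    (∫ t in Set.Iic T, (cdf μ t) ^ m ∂μ) = (cdf μ T) ^ (m + 1) / (m + 1) := by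
  set c : ℝ := cdf μ T with hc
  have hc1 : c ≤ 1 := cdf_le_one μ T
  have hmeas : Measurable (⇑(cdf μ)) := (monotone_cdf μ).measurable
  -- null set lemma
  have hlevel : μ {t | cdf μ t ≤ c} = ENNReal.ofReal c := cdf_level_measure μ hc1
  have hIicT : μ (Iic T) = ENNReal.ofReal c := (ofReal_cdf μ T).symm
  have hsub : Iic T ⊆ {t | cdf μ t ≤ c} := fun t ht => monotone_cdf μ ht
  have hnull : μ ({t | cdf μ t ≤ c} \ Iic T) = 0 := by
    rw [measure_diff hsub measurableSet_Iic.nullMeasurableSet (by rw [hIicT]; exact ENNReal.ofReal_ne_top),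
      hlevel, hIicT, tsub_self]
  -- ae set equalities
  have hpre : (cdf μ) ⁻¹' (Iic c) = {t | cdf μ t ≤ c} := rfl
  have hIic_ae : Iic T =ᵐ[μ] (cdf μ) ⁻¹' (Iic c) := by
    rw [ae_eq_set]
    constructor
    · rw [diff_eq_empty.mpr (hpre ▸ hsub)]
      exact measure_empty
    · rw [hpre]; exact hnull
  have hIoi_ae : Ioi T =ᵐ[μ] (cdf μ) ⁻¹' (Ioi c) := by
    rw [ae_eq_set]
    constructor
    · have : Ioi T \ (cdf μ) ⁻¹' (Ioi c) = {t | cdf μ t ≤ c} \ Iic T := by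
        ext t
        simp only [mem_diff, mem_Ioi, mem_preimage, mem_setOf_eq, mem_Iic, not_lt, not_le]
        tauto
      rw [this]; exact hnull
    · have : (cdf μ) ⁻¹' (Ioi c) \ Ioi T = ∅ := by
        rw [diff_eq_empty]
        intro t ht
        simp only [mem_preimage, mem_Ioi] at ht ⊢
        by_contra h
        push_neg at h
        exact absurd (monotone_cdf μ h) (not_le.mpr ht)
      rw [this]; exact measure_empty
  have hmap := map_cdf_eq μ
  constructor
  · -- Ioi part
    have hf : AEStronglyMeasurable (fun u : ℝ => (Real.log u) ^ m / u) (μ.map (⇑(cdf μ))) :=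
      ((Real.measurable_log.pow_const m).div measurable_id).aestronglyMeasurable
    have hinter : Ioi c ∩ Icc (0:ℝ) 1 = Ioc c 1 := by
      ext u
      simp only [mem_inter_iff, mem_Ioi, mem_Icc, mem_Ioc]
      constructor
      · rintro ⟨h1, _, h3⟩; exact ⟨h1, h3⟩
      · rintro ⟨h1, h2⟩; exact ⟨h1, le_of_lt (lt_of_lt_of_le hT h1.le), h2⟩
    calc ∫ t in Ioi T, (Real.log (cdf μ t)) ^ m / cdf μ t ∂μ
        = ∫ t in (cdf μ) ⁻¹' (Ioi c), (Real.log (cdf μ t)) ^ m / cdf μ t ∂μ :=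
          setIntegral_congr_set hIoi_ae
      _ = ∫ u in Ioi c, (Real.log u) ^ m / u ∂(μ.map (⇑(cdf μ))) :=
          (setIntegral_map measurableSet_Ioi hf hmeas.aemeasurable).symm
      _ = ∫ u in Ioi c, (Real.log u) ^ m / u ∂(volume.restrict (Icc 0 1)) := by rw [hmap]
      _ = ∫ u in Ioc c 1, (Real.log u) ^ m / u := by
          rw [Measure.restrict_restrict measurableSet_Ioi, hinter]
      _ = ∫ u in c..1, (Real.log u) ^ m / u := (intervalIntegral.integral_of_le hc1).symm
      _ = -((Real.log c) ^ (m + 1) / (m + 1)) := by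
          have key : ∫ u in c..1, (Real.log u) ^ m / u =
              (Real.log 1) ^ (m + 1) / (m + 1) - (Real.log c) ^ (m + 1) / (m + 1) := by
            apply intervalIntegral.integral_eq_sub_of_hasDerivAt
              (f := fun u => (Real.log u) ^ (m + 1) / ((m : ℝ) + 1))
            · intro u hu
              rw [uIcc_of_le hc1] at hu
              have hu0 : (0:ℝ) < u := lt_of_lt_of_le hT hu.1
              have h := ((Real.hasDerivAt_log (ne_of_gt hu0)).pow (m + 1)).div_const ((m : ℝ) + 1)
              refine h.congr_deriv ?_
              have hm : (0:ℝ) < (m : ℝ) + 1 := by positivity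
              rw [Nat.add_sub_cancel]; push_cast
              field_simp
            · apply ContinuousOn.intervalIntegrable
              rw [uIcc_of_le hc1]
              have hsub01 : Icc c 1 ⊆ {(0:ℝ)}ᶜ := fun u hu => by
                simp only [mem_compl_iff, mem_singleton_iff]
                exact ne_of_gt (lt_of_lt_of_le hT hu.1)
              exact ((Real.continuousOn_log.mono hsub01).pow m).div continuousOn_id
                fun u hu => ne_of_gt (lt_of_lt_of_le hT hu.1)
          rw [key, Real.log_one, zero_pow (Nat.succ_ne_zero m), zero_div, zero_sub]
  · -- Iic part
    have hf : AEStronglyMeasurable (fun u : ℝ => u ^ m) (μ.map (⇑(cdf μ))) :=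
      (continuous_pow m).aestronglyMeasurable
    have hinter : Iic c ∩ Icc (0:ℝ) 1 = Icc 0 c := by
      ext u
      simp only [mem_inter_iff, mem_Iic, mem_Icc]
      constructor
      · rintro ⟨h1, h2, _⟩; exact ⟨h2, h1⟩
      · rintro ⟨h1, h2⟩; exact ⟨h2, h1, h2.trans hc1⟩
    calc ∫ t in Iic T, (cdf μ t) ^ m ∂μ
        = ∫ t in (cdf μ) ⁻¹' (Iic c), (cdf μ t) ^ m ∂μ := setIntegral_congr_set hIic_ae
      _ = ∫ u in Iic c, u ^ m ∂(μ.map (⇑(cdf μ))) :=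
          (setIntegral_map measurableSet_Iic hf hmeas.aemeasurable).symm
      _ = ∫ u in Iic c, u ^ m ∂(volume.restrict (Icc 0 1)) := by rw [hmap]
      _ = ∫ u in Icc (0:ℝ) c, u ^ m := by
          rw [Measure.restrict_restrict measurableSet_Iic, hinter]
      _ = ∫ u in (0:ℝ)..c, u ^ m := by
          rw [MeasureTheory.integral_Icc_eq_integral_Ioc,
            ← intervalIntegral.integral_of_le hT.le]
      _ = c ^ (m + 1) / (m + 1) := by
          rw [integral_pow]
          simp [zero_pow (Nat.succ_ne_zero m)]
end Main

/-- **Two integral identities for distribution functions.**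
Let `μ` be an atomless probability measure on `ℝ` with distribution function `F`, `T` a
real number with `F(T) > 0`, and `m ∈ ℕ`.  Then
`∫_{(T,∞)} (log F(t))^m / F(t) dμ(t) = -(log F(T))^{m+1}/(m+1)` and
`∫_{(-∞,T]} F(t)^m dμ(t) = F(T)^{m+1}/(m+1)`. -/
theorem integral_log_cdf_pow (μ : Measure ℝ) [IsProbabilityMeasure μ] [NullSingletonClass μ]
    (T : ℝ) (hT : 0 < cdf' μ T) (m : ℕ) :
    (∫ t in Set.Ioi T, (Real.log (cdf' μ t)) ^ m / cdf' μ t ∂μ) =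
        -((Real.log (cdf' μ T)) ^ (m + 1) / (m + 1)) ∧
    (∫ t in Set.Iic T, (cdf' μ t) ^ m ∂μ) = (cdf' μ T) ^ (m + 1) / (m + 1) := by
  have hFc : cdf' μ = ⇑(ProbabilityTheory.cdf μ) :=
    funext fun x => (ProbabilityTheory.cdf_eq_real μ x).symm
  rw [hFc] at hT ⊢
  exact integral_log_cdf_pow_aux μ T hT m
end

section
/- For every integer N ≥ 1 the following two inequalities hold: (a) for every real x with 0 ≤ x < 1, ∫_0^x (N^N/(N−1)!) · u^{N−1} e^{−Nu} du ≤ x^N e^{N(1−x)}; (b) for every real x > 1, ∫_x^{+∞} (N^N/(N−1)!) · u^{N−1} e^{−Nu} du ≤ x^N e^{N(1−x)}. -/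
open MeasureTheory Set Real

private lemma gamma_int (N : ℕ) (hN : 1 ≤ N) {c : ℝ} (hc : 0 < c) :
    ∫ u in Set.Ioi (0:ℝ), u ^ (N-1) * Real.exp (-(c*u)) = ((N-1).factorial : ℝ) / c ^ N := by
  have h := integral_rpow_mul_exp_neg_mul_Ioi (a := (N:ℝ)) (r := c)
      (by exact_mod_cast Nat.pos_of_ne_zero (by omega)) hc
  have hG : Real.Gamma (N:ℝ) = ((N-1).factorial : ℝ) := by
    rw [show ((N:ℝ)) = ((N-1:ℕ):ℝ) + 1 by push_cast [Nat.cast_sub hN]; ring,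
      Real.Gamma_nat_eq_factorial]
  have hcong : ∫ u in Set.Ioi (0:ℝ), u ^ (N-1) * Real.exp (-(c*u))
      = ∫ t in Set.Ioi (0:ℝ), t ^ ((N:ℝ)-1) * Real.exp (-(c*t)) := by
    refine setIntegral_congr_fun measurableSet_Ioi (fun t ht => ?_)
    rw [show ((N:ℝ)-1) = ((N-1:ℕ):ℝ) by push_cast [Nat.cast_sub hN]; ring,
      Real.rpow_natCast]
  rw [hcong, h, hG, one_div, Real.rpow_natCast, inv_pow]
  ring

private lemma gamma_intble (N : ℕ) {c : ℝ} (hc : 0 < c) :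
    IntegrableOn (fun u : ℝ => u ^ (N-1) * Real.exp (-(c*u))) (Set.Ioi 0) := by
  have h := integrableOn_rpow_mul_exp_neg_mul_rpow (s := ((N-1:ℕ):ℝ)) (p := 1)
      (lt_of_lt_of_le neg_one_lt_zero (Nat.cast_nonneg _)) one_pos hc
  refine h.congr_fun (fun x hx => ?_) measurableSet_Ioi
  beta_reduce
  rw [Real.rpow_natCast, Real.rpow_one, neg_mul]

private lemma gamma_calc (N : ℕ) (hN : 1 ≤ N) {x : ℝ} (hx : 0 < x) :
    ((N:ℝ) ^ N / ((N-1).factorial : ℝ) * Real.exp (((N:ℝ)/x - N) * x)) *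
      (((N-1).factorial : ℝ) / ((N:ℝ)/x) ^ N) = x ^ N * Real.exp ((N:ℝ) * (1 - x)) := by
  have hNpos : (0:ℝ) < N := by exact_mod_cast Nat.pos_of_ne_zero (by omega)
  have hfac : ((N-1).factorial : ℝ) ≠ 0 := by exact_mod_cast (N-1).factorial_ne_zero
  have he : ((N:ℝ)/x - N) * x = (N:ℝ) * (1 - x) := by field_simp
  rw [he, div_pow]
  field_simp

/-- **Chernoff-type tail bounds for the Gamma(N, N) distribution.**
For every integer `N ≥ 1`:
(a) for `0 ≤ x < 1`, `∫_0^x (N^N/(N-1)!) u^{N-1} e^{-Nu} du ≤ x^N e^{N(1-x)}`;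
(b) for `x > 1`, `∫_x^∞ (N^N/(N-1)!) u^{N-1} e^{-Nu} du ≤ x^N e^{N(1-x)}`. -/
theorem gamma_tail_bounds (N : ℕ) (hN : 1 ≤ N) :
    (∀ x : ℝ, 0 ≤ x → x < 1 →
      (∫ u in (0 : ℝ)..x,
          (N : ℝ) ^ N / ((N - 1).factorial : ℝ) * u ^ (N - 1) * Real.exp (-(N : ℝ) * u)) ≤
        x ^ N * Real.exp ((N : ℝ) * (1 - x))) ∧
    (∀ x : ℝ, 1 < x →
      (∫ u in Set.Ioi x,
          (N : ℝ) ^ N / ((N - 1).factorial : ℝ) * u ^ (N - 1) * Real.exp (-(N : ℝ) * u)) ≤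
        x ^ N * Real.exp ((N : ℝ) * (1 - x))) := by
  have hNpos : (0:ℝ) < N := by exact_mod_cast Nat.pos_of_ne_zero (by omega)
  set C : ℝ := (N:ℝ) ^ N / ((N-1).factorial : ℝ) with hCdef
  have hC : 0 ≤ C := by positivity
  have hcont : Continuous (fun u : ℝ => C * u ^ (N-1) * Real.exp (-(N:ℝ) * u)) := by
    continuity
  constructor
  · intro x hx0 hx1
    rcases eq_or_lt_of_le hx0 with h0 | h0
    · rw [← h0]
      simp [zero_pow (by omega : N ≠ 0)]
    · set c : ℝ := (N:ℝ) / x with hcdef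
      have hc : 0 < c := by positivity
      have hcN : (N:ℝ) ≤ c := by
        rw [hcdef, le_div_iff₀ h0]
        nlinarith
      -- pointwise bound on Ioc 0 x
      have hpt : ∀ u ∈ Set.Ioc (0:ℝ) x,
          C * u ^ (N-1) * Real.exp (-(N:ℝ) * u)
            ≤ (C * Real.exp ((c - N) * x)) * (u ^ (N-1) * Real.exp (-(c*u))) := by
        intro u hu
        have hupow : (0:ℝ) ≤ u ^ (N-1) := pow_nonneg hu.1.le _
        have hexp : Real.exp (-(N:ℝ) * u) ≤ Real.exp ((c - N) * x) * Real.exp (-(c*u)) := by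
          rw [← Real.exp_add]
          apply Real.exp_le_exp.mpr
          nlinarith [mul_le_mul_of_nonneg_left hu.2 (sub_nonneg.mpr hcN)]
        calc C * u ^ (N-1) * Real.exp (-(N:ℝ) * u)
            ≤ C * u ^ (N-1) * (Real.exp ((c - N) * x) * Real.exp (-(c*u))) := by
              apply mul_le_mul_of_nonneg_left hexp (by positivity)
          _ = (C * Real.exp ((c - N) * x)) * (u ^ (N-1) * Real.exp (-(c*u))) := by ring
      rw [intervalIntegral.integral_of_le hx0]
      have hint1 : IntegrableOn (fun u : ℝ => C * u ^ (N-1) * Real.exp (-(N:ℝ) * u))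
          (Set.Ioc 0 x) := hcont.integrableOn_Ioc
      have hint2 : IntegrableOn
          (fun u : ℝ => (C * Real.exp ((c - N) * x)) * (u ^ (N-1) * Real.exp (-(c*u))))
          (Set.Ioi 0) := (gamma_intble N hc).const_mul _
      calc (∫ u in Set.Ioc (0:ℝ) x, C * u ^ (N-1) * Real.exp (-(N:ℝ) * u))
          ≤ ∫ u in Set.Ioc (0:ℝ) x,
              (C * Real.exp ((c - N) * x)) * (u ^ (N-1) * Real.exp (-(c*u))) :=
            setIntegral_mono_on hint1 (hint2.mono_set Set.Ioc_subset_Ioi_self)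
              measurableSet_Ioc hpt
        _ ≤ ∫ u in Set.Ioi (0:ℝ),
              (C * Real.exp ((c - N) * x)) * (u ^ (N-1) * Real.exp (-(c*u))) := by
            apply setIntegral_mono_set hint2
            · filter_upwards [ae_restrict_mem measurableSet_Ioi] with u hu
              have : (0:ℝ) < u := hu
              positivity
            · exact Filter.Eventually.of_forall Set.Ioc_subset_Ioi_self
        _ = (C * Real.exp ((c - N) * x)) * (((N-1).factorial : ℝ) / c ^ N) := by
            rw [integral_const_mul, gamma_int N hN hc]
        _ = x ^ N * Real.exp ((N:ℝ) * (1 - x)) := by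
            rw [hCdef, hcdef, mul_assoc, ← mul_assoc, ← gamma_calc N hN h0]
  · intro x hx1
    have h0 : (0:ℝ) < x := lt_trans one_pos hx1
    set c : ℝ := (N:ℝ) / x with hcdef
    have hc : 0 < c := by positivity
    have hcN : c ≤ (N:ℝ) := by
      rw [hcdef, div_le_iff₀ h0]
      nlinarith
    have hpt : ∀ u ∈ Set.Ioi x,
        C * u ^ (N-1) * Real.exp (-(N:ℝ) * u)
          ≤ (C * Real.exp ((c - N) * x)) * (u ^ (N-1) * Real.exp (-(c*u))) := by
      intro u hu
      have hux : x < u := hu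
      have hu0 : 0 ≤ u := le_trans h0.le hux.le
      have hexp : Real.exp (-(N:ℝ) * u) ≤ Real.exp ((c - N) * x) * Real.exp (-(c*u)) := by
        rw [← Real.exp_add]
        apply Real.exp_le_exp.mpr
        nlinarith [mul_le_mul_of_nonpos_left hux.le (sub_nonpos.mpr hcN)]
      calc C * u ^ (N-1) * Real.exp (-(N:ℝ) * u)
          ≤ C * u ^ (N-1) * (Real.exp ((c - N) * x) * Real.exp (-(c*u))) := by
            apply mul_le_mul_of_nonneg_left hexp (by positivity)
        _ = (C * Real.exp ((c - N) * x)) * (u ^ (N-1) * Real.exp (-(c*u))) := by ring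
    have hsub : Set.Ioi x ⊆ Set.Ioi (0:ℝ) := fun u hu => lt_trans h0 hu
    have hint1 : IntegrableOn (fun u : ℝ => C * u ^ (N-1) * Real.exp (-(N:ℝ) * u))
        (Set.Ioi x) :=
      (IntegrableOn.mono_set ((gamma_intble N hNpos).const_mul C) hsub).congr_fun
        (fun u hu => by ring) measurableSet_Ioi
    have hint2 : IntegrableOn
        (fun u : ℝ => (C * Real.exp ((c - N) * x)) * (u ^ (N-1) * Real.exp (-(c*u))))
        (Set.Ioi 0) := (gamma_intble N hc).const_mul _
    calc (∫ u in Set.Ioi x, C * u ^ (N-1) * Real.exp (-(N:ℝ) * u))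
        ≤ ∫ u in Set.Ioi x,
            (C * Real.exp ((c - N) * x)) * (u ^ (N-1) * Real.exp (-(c*u))) :=
          setIntegral_mono_on hint1 (hint2.mono_set hsub) measurableSet_Ioi hpt
      _ ≤ ∫ u in Set.Ioi (0:ℝ),
            (C * Real.exp ((c - N) * x)) * (u ^ (N-1) * Real.exp (-(c*u))) := by
          apply setIntegral_mono_set hint2
          · filter_upwards [ae_restrict_mem measurableSet_Ioi] with u hu
            have : (0:ℝ) < u := hu
            positivity
          · exact Filter.Eventually.of_forall hsub
      _ = (C * Real.exp ((c - N) * x)) * (((N-1).factorial : ℝ) / c ^ N) := by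
          rw [integral_const_mul, gamma_int N hN hc]
      _ = x ^ N * Real.exp ((N:ℝ) * (1 - x)) := by
          rw [hCdef, hcdef, mul_assoc, ← mul_assoc, ← gamma_calc N hN h0]
end

section
/- Let (a_k)_{k≥1} be a sequence of real numbers with 0 ≤ a_k ≤ 1 for all k, and let L be a real number with 0 < L ≤ 1. If a_k^k → L as k → ∞, then k·(a_k − 1) → log L as k → ∞; consequently max(0, 1 + k(a_k − 1)) → max(0, 1 + log L). In particular, if cumulative distribution functions F_k satisfy F_k(x)^k → F(x) with F(x) > 0 at some point x, then the k-fold free upper extremal convolution power F_k(x)^{⊞k} = max(0, 1 + k(F_k(x) − 1)) converges to max(0, 1 + log F(x)) = Λ^∨(F(x)). -/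
/-- **Convergence of free extremal convolution powers.**
Let `(a_k) ⊆ [0,1]` and `0 < L ≤ 1` with `a_k^k → L`.  Then `k (a_k - 1) → log L`, and
consequently the `k`-fold free upper extremal convolution powers
`max 0 (1 + k(a_k - 1))` converge to `max 0 (1 + log L) = Λ^∨(L)`.
(Applied to `a_k = F_k(x)` where `F_k(x)^k → F(x) > 0`, this gives
`F_k(x)^{⊞k} → Λ^∨(F(x))`.) -/
theorem free_max_conv_power_tendsto (a : ℕ → ℝ) (ha : ∀ k, 0 ≤ a k ∧ a k ≤ 1)
    (L : ℝ) (hL : 0 < L) (hL1 : L ≤ 1)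
    (h : Filter.Tendsto (fun k : ℕ => a k ^ k) Filter.atTop (nhds L)) :
    Filter.Tendsto (fun k : ℕ => (k : ℝ) * (a k - 1)) Filter.atTop (nhds (Real.log L)) ∧
    Filter.Tendsto (fun k : ℕ => max 0 (1 + (k : ℝ) * (a k - 1))) Filter.atTop
      (nhds (max 0 (1 + Real.log L))) := by
  -- eventual positivity of a k
  have hpos : ∀ᶠ k : ℕ in Filter.atTop, 0 < a k := by
    have h1 : ∀ᶠ k : ℕ in Filter.atTop, 0 < a k ^ k :=
      h.eventually (eventually_gt_nhds hL)
    filter_upwards [h1, Filter.eventually_ge_atTop 1] with k hk hk1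
    rcases (ha k).1.lt_or_eq with h' | h'
    · exact h'
    · exfalso; rw [← h', zero_pow (by omega)] at hk; exact lt_irrefl 0 hk
  -- k * log (a k) → log L
  have hlog : Filter.Tendsto (fun k : ℕ => (k : ℝ) * Real.log (a k))
      Filter.atTop (nhds (Real.log L)) := by
    have := (Real.continuousAt_log hL.ne').tendsto.comp h
    simp only [Function.comp_def, Real.log_pow] at this
    exact this
  -- log (a k) → 0
  have hlog0 : Filter.Tendsto (fun k : ℕ => Real.log (a k)) Filter.atTop (nhds 0) := by
    have hinv : Filter.Tendsto (fun k : ℕ => (k : ℝ)⁻¹) Filter.atTop (nhds 0) :=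
      tendsto_inv_atTop_zero.comp tendsto_natCast_atTop_atTop
    have := hlog.mul hinv
    rw [mul_zero] at this
    refine this.congr' ?_
    filter_upwards [Filter.eventually_ge_atTop 1] with k hk
    have : (k : ℝ) ≠ 0 := by positivity
    field_simp
  -- a k → 1
  have ha1 : Filter.Tendsto a Filter.atTop (nhds 1) := by
    have := (Real.continuous_exp.tendsto 0).comp hlog0
    rw [Real.exp_zero] at this
    refine this.congr' ?_
    filter_upwards [hpos] with k hk
    simp [Function.comp, Real.exp_log hk]
  -- squeeze: k log a ≤ k (a - 1) ≤ a * (k log a)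
  have hmain : Filter.Tendsto (fun k : ℕ => (k : ℝ) * (a k - 1)) Filter.atTop
      (nhds (Real.log L)) := by
    have hupper : Filter.Tendsto (fun k : ℕ => a k * ((k : ℝ) * Real.log (a k)))
        Filter.atTop (nhds (Real.log L)) := by
      have := ha1.mul hlog
      simpa using this
    refine tendsto_of_tendsto_of_tendsto_of_le_of_le' hlog hupper ?_ ?_
    · filter_upwards [hpos] with k hk
      have : Real.log (a k) ≤ a k - 1 := Real.log_le_sub_one_of_pos hk
      exact mul_le_mul_of_nonneg_left this (Nat.cast_nonneg k)
    · filter_upwards [hpos] with k hk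
      have h2 : a k - 1 ≤ a k * Real.log (a k) := by
        have h3 := Real.log_le_sub_one_of_pos (inv_pos.mpr hk)
        rw [Real.log_inv] at h3
        have h4 := mul_le_mul_of_nonneg_left h3 hk.le
        rw [mul_sub, mul_inv_cancel₀ hk.ne', mul_one, mul_neg] at h4
        linarith
      calc (k : ℝ) * (a k - 1) ≤ (k : ℝ) * (a k * Real.log (a k)) :=
            mul_le_mul_of_nonneg_left h2 (Nat.cast_nonneg k)
        _ = a k * ((k : ℝ) * Real.log (a k)) := by ring
  exact ⟨hmain, tendsto_const_nhds.max (tendsto_const_nhds.add hmain)⟩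
end
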